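/- There exists a universal constant c > 0 such that for every n ≥ 3 and every nonempty finite subset x of ZMod n, writing ℓ = max_{k ∈ x} d_{Cₙ}(0, k), one has Σ_{I ∈ 𝓘} Σ_{A ⊆ I} Σ_{k ∈ ZMod n} 1[|A ∩ {j − k : j ∈ x}| is odd]·(v^I_k)² ≥ c·(1 + ℓ²). -/

import Mathlib

open Finset

/-- The cycle metric on `ZMod n`: the least `|a|` over integers `a` with
`a ≡ j - k (mod n)`. -/
noncomputable def cycDist (n : ℕ) (j k : ZMod n) : ℕ :=
  sInf {m : ℕ | ∃ a : ℤ, a.natAbs = m ∧ (a : ZMod n) = j - k}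

/-- The arc `{a, a+1, …, a + (⌊n/3⌋ - 1)}` of length `m = ⌊n/3⌋` in `ZMod n`.
As `a` ranges over `ZMod n` this produces the family `𝓘` of all `n` such arcs. -/
def arc (n : ℕ) (a : ZMod n) : Finset (ZMod n) :=
  (Finset.range (n / 3)).image (fun i : ℕ => a + (i : ZMod n))

/-- distance from a point `k` to the arc starting at `a`: `min_{i ∈ I} d_{Cₙ}(k, i)`. -/
noncomputable def dArc (n : ℕ) (a k : ZMod n) : ℕ :=
  sInf {m : ℕ | ∃ i ∈ arc n a, cycDist n k i = m}

/-- `η = 1 / (n · 2^{n/6})`. -/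
noncomputable def eta (n : ℕ) : ℝ := 1 / ((n : ℝ) * (2 : ℝ) ^ ((n : ℝ) / 6))

/-- `δ = 1 / (√n · 2^{n/6})`. -/
noncomputable def dlt (n : ℕ) : ℝ := 1 / (Real.sqrt n * (2 : ℝ) ^ ((n : ℝ) / 6))

/-- The vector `v^I` attached to the arc `I` starting at `a`:
`v^I_k = η` for `k ∈ I` and `v^I_k = δ·√(d(k, I))` for `k ∉ I`. -/
noncomputable def vI (n : ℕ) (a k : ZMod n) : ℝ :=
  if k ∈ arc n a then eta n else dlt n * Real.sqrt (dArc n a k)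

section cyc
variable (n : ℕ) [NeZero n]

lemma natCast_val_cast (j : ZMod n) : ((j.val : ℤ) : ZMod n) = j := by
  rw [Int.cast_natCast, ZMod.natCast_rightInverse j]

lemma cycSet_nonempty (j k : ZMod n) :
    {m : ℕ | ∃ a : ℤ, a.natAbs = m ∧ (a : ZMod n) = j - k}.Nonempty :=
  ⟨(j - k).val, ((j - k).val : ℤ), Int.natAbs_natCast _, natCast_val_cast n (j - k)⟩

lemma cycDist_mem (j k : ZMod n) :
    ∃ a : ℤ, a.natAbs = cycDist n j k ∧ (a : ZMod n) = j - k :=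
  Nat.sInf_mem (cycSet_nonempty n j k)

lemma cycDist_le_natAbs (j k : ZMod n) (a : ℤ) (h : (a : ZMod n) = j - k) :
    cycDist n j k ≤ a.natAbs :=
  Nat.sInf_le ⟨a, rfl, h⟩

lemma cycDist_le_val (j k : ZMod n) : cycDist n j k ≤ (j - k).val := by
  have := cycDist_le_natAbs n j k ((j - k).val : ℤ) (natCast_val_cast n (j - k))
  rwa [Int.natAbs_natCast] at this

lemma cycDist_le_sub_val (j k : ZMod n) : cycDist n j k ≤ n - (j - k).val := by
  have hle : (j - k).val ≤ n := le_of_lt (ZMod.val_lt _)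
  have : ((((j - k).val : ℤ) - n : ℤ) : ZMod n) = j - k := by
    rw [Int.cast_sub, natCast_val_cast n (j - k)]
    simp
  have h2 := cycDist_le_natAbs n j k (((j - k).val : ℤ) - n) this
  omega

lemma min_le_cycDist (j k : ZMod n) :
    min (j - k).val (n - (j - k).val) ≤ cycDist n j k := by
  obtain ⟨a, habs, hcast⟩ := cycDist_mem n j k
  set v := (j - k).val with hv
  have hvn : v < n := ZMod.val_lt _
  have hdvd : (n : ℤ) ∣ a - v := by
    rw [← ZMod.intCast_zmod_eq_zero_iff_dvd]
    rw [Int.cast_sub, hcast, natCast_val_cast n (j - k)]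
    simp
  obtain ⟨q, hq⟩ := hdvd
  rcases lt_trichotomy q 0 with h | h | h
  · have h1 : (n : ℤ) * q ≤ (n : ℤ) * (-1) :=
      mul_le_mul_of_nonneg_left (by omega) (by positivity)
    have ha : a ≤ (v : ℤ) - n := by omega
    omega
  · subst h; omega
  · have h1 : (n : ℤ) * 1 ≤ (n : ℤ) * q :=
      mul_le_mul_of_nonneg_left (by omega) (by positivity)
    have ha : (v : ℤ) + n ≤ a := by omega
    omega

lemma cycDist_triangle (x y z : ZMod n) :
    cycDist n x z ≤ cycDist n x y + cycDist n y z := by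
  obtain ⟨a, ha, hac⟩ := cycDist_mem n x y
  obtain ⟨b, hb, hbc⟩ := cycDist_mem n y z
  have := cycDist_le_natAbs n x z (a + b) (by push_cast [hac, hbc]; ring)
  have := Int.natAbs_add_le a b
  omega

lemma cycDist_shift (k a : ZMod n) : cycDist n k a = cycDist n (k - a) 0 := by
  simp [cycDist, sub_zero]

lemma cycDist_natCast_le (t : ℕ) (a : ZMod n) : cycDist n (a + (t:ZMod n)) a ≤ t := by
  simpa using cycDist_le_natAbs n (a + (t:ZMod n)) a (t : ℤ) (by push_cast; ring)

end cyc

section arcs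
variable (n : ℕ) [NeZero n] (hn : 3 ≤ n)

lemma natCast_inj_lt {t s : ℕ} (ht : t < n) (hs : s < n) (h : (t : ZMod n) = (s : ZMod n)) :
    t = s := by
  have := congrArg ZMod.val h
  rwa [ZMod.val_natCast_of_lt ht, ZMod.val_natCast_of_lt hs] at this

lemma mem_arc {a i : ZMod n} : i ∈ arc n a ↔ ∃ t < n / 3, i = a + (t : ZMod n) := by
  simp [arc, eq_comm]

include hn

lemma arc_nonempty (a : ZMod n) : a ∈ arc n a := by
  rw [mem_arc]
  exact ⟨0, by omega, by simp⟩

lemma card_arc (a : ZMod n) : (arc n a).card = n / 3 := by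
  rw [arc, Finset.card_image_of_injOn, Finset.card_range]
  intro t ht s hs h
  simp only [Finset.mem_range, Finset.coe_range, Set.mem_Iio] at ht hs
  exact natCast_inj_lt n (by omega) (by omega) (add_left_cancel h)

lemma dArc_mem (a k : ZMod n) : ∃ i ∈ arc n a, cycDist n k i = dArc n a k :=
  Nat.sInf_mem (⟨cycDist n k a, a, arc_nonempty n hn a, rfl⟩ :
    {m : ℕ | ∃ i ∈ arc n a, cycDist n k i = m}.Nonempty)

lemma dArc_ge (a k : ZMod n) : cycDist n k a - (n / 3 - 1) ≤ dArc n a k := by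
  obtain ⟨i, hi, hd⟩ := dArc_mem n hn a k
  obtain ⟨t, ht, rfl⟩ := (mem_arc n).mp hi
  have h1 := cycDist_triangle n k (a + (t : ZMod n)) a
  have h2 : cycDist n (a + (t : ZMod n)) a ≤ t := cycDist_natCast_le n t a
  omega

lemma cycDist_eq_zero {j k : ZMod n} (h : cycDist n j k = 0) : j = k := by
  obtain ⟨a, habs, hcast⟩ := cycDist_mem n j k
  rw [h, Int.natAbs_eq_zero] at habs
  rw [habs] at hcast
  simp at hcast
  linear_combination (norm := ring_nf) -hcast

lemma dArc_pos (a k : ZMod n) (hk : k ∉ arc n a) : 1 ≤ dArc n a k := by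
  obtain ⟨i, hi, hd⟩ := dArc_mem n hn a k
  rcases Nat.eq_zero_or_pos (dArc n a k) with h0 | h1
  · rw [h0] at hd
    exact absurd (cycDist_eq_zero n hn hd ▸ hi) hk
  · exact h1

end arcs

section counting
variable {α : Type*} [DecidableEq α]

lemma odd_filter_card_ge (I B : Finset α) (c0 : α) (hcI : c0 ∈ I) (hcB : c0 ∈ B) :
    2 ^ (I.card - 1) ≤ ((I.powerset).filter (fun A => Odd ((A ∩ B).card))).card := by
  classical
  set ι : Finset α → Finset α := fun A => if c0 ∈ A then A.erase c0 else insert c0 A with hι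
  have hinv : ∀ A : Finset α, ι (ι A) = A := by
    intro A
    by_cases h : c0 ∈ A
    · simp [hι, h, Finset.insert_erase]
    · simp [hι, h, Finset.erase_insert]
  have hpar : ∀ A : Finset α, (Odd ((ι A ∩ B).card) ↔ ¬ Odd ((A ∩ B).card)) := by
    intro A
    by_cases h : c0 ∈ A
    · have he : ι A ∩ B = (A ∩ B).erase c0 := by
        simp only [hι, if_pos h]
        ext y
        simp only [Finset.mem_inter, Finset.mem_erase]
        tauto
      have hc : c0 ∈ A ∩ B := Finset.mem_inter.mpr ⟨h, hcB⟩
      have := Finset.card_erase_of_mem hc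
      have hpos : 1 ≤ (A ∩ B).card := Finset.card_pos.mpr ⟨c0, hc⟩
      rw [he, this, Nat.odd_iff, Nat.odd_iff]
      omega
    · have he : ι A ∩ B = insert c0 (A ∩ B) := by
        simp only [hι, if_neg h]
        ext y
        simp only [Finset.mem_inter, Finset.mem_insert]
        by_cases hy : y = c0 <;> simp [hy, hcB] <;> tauto
      have hc : c0 ∉ A ∩ B := fun hc => h (Finset.mem_inter.mp hc).1
      rw [he, Finset.card_insert_of_notMem hc, Nat.odd_iff, Nat.odd_iff]
      omega
  have hmaps : ∀ A ∈ I.powerset, ι A ∈ I.powerset := by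
    intro A hA
    rw [Finset.mem_powerset] at hA ⊢
    by_cases h : c0 ∈ A
    · simp only [hι, if_pos h]
      exact (Finset.erase_subset _ _).trans hA
    · simp only [hι, if_neg h]
      exact Finset.insert_subset hcI hA
  have hcardle : ((I.powerset).filter (fun A => ¬ Odd ((A ∩ B).card))).card ≤
      ((I.powerset).filter (fun A => Odd ((A ∩ B).card))).card := by
    apply Finset.card_le_card_of_injOn ι
    · intro A hA
      simp only [Finset.coe_filter, Finset.mem_coe, Finset.mem_filter, Set.mem_setOf_eq] at hA ⊢
      exact ⟨hmaps A hA.1, (hpar A).mpr hA.2⟩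
    · intro A _ A' _ h
      have := congrArg ι h
      rwa [hinv, hinv] at this
  have hsplit := Finset.card_filter_add_card_filter_not
    (s := I.powerset) (p := fun A => Odd ((A ∩ B).card))
  rw [Finset.card_powerset] at hsplit
  have hIpos : 1 ≤ I.card := Finset.card_pos.mpr ⟨c0, hcI⟩
  have h2 : 2 ^ I.card = 2 * 2 ^ (I.card - 1) := by
    rw [← pow_succ']
    congr 1
    omega
  omega

lemma sum_ite_odd_ge (I B : Finset α) (c0 : α) (hcI : c0 ∈ I) (hcB : c0 ∈ B)
    (w : ℝ) (hw : 0 ≤ w) :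
    (2 ^ (I.card - 1) : ℝ) * w ≤ ∑ A ∈ I.powerset, (if Odd ((A ∩ B).card) then w else 0) := by
  rw [← Finset.sum_filter, Finset.sum_const, nsmul_eq_mul]
  apply mul_le_mul_of_nonneg_right _ hw
  exact_mod_cast Nat.cast_le.mpr (odd_filter_card_ge I B c0 hcI hcB)

section reindex
variable (n : ℕ) [NeZero n]

lemma zmod_sum_le_double (F : ZMod n → ℕ) (c : ZMod n) :
    ∑ s : ZMod n, F s ≤ ∑ a : ZMod n, (F (c - 2*a - 1) + F (c - 2*a)) := by
  classical
  set ψ : ZMod n × Bool → ZMod n := fun p => c - 2*p.1 - (if p.2 then 1 else 0) with hψ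
  set ρ : ZMod n → ZMod n × Bool :=
    fun s => ((((c - s).val / 2 : ℕ) : ZMod n), decide ((c - s).val % 2 = 1)) with hρ
  have hψρ : ∀ s, ψ (ρ s) = s := by
    intro s
    set r := (c - s).val with hr
    have h1 : ((r : ℕ) : ZMod n) = c - s := ZMod.natCast_rightInverse _
    have h2 : (if (decide (r % 2 = 1)) = true then (1 : ZMod n) else 0) = ((r % 2 : ℕ) : ZMod n) := by
      rcases Nat.mod_two_eq_zero_or_one r with h | h <;> simp [h]
    have h3 : (2 : ZMod n) * ((r / 2 : ℕ) : ZMod n) + ((r % 2 : ℕ) : ZMod n) = c - s := by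
      rw [← h1]
      push_cast
      rw [← Nat.cast_ofNat, ← Nat.cast_mul, ← Nat.cast_add]
      congr 1
      omega
    simp only [hψ, hρ]
    rw [h2]
    linear_combination -h3
  have hinj : Function.Injective ρ := by
    intro s s' h
    rw [← hψρ s, ← hψρ s', h]
  calc ∑ s : ZMod n, F s = ∑ s : ZMod n, F (ψ (ρ s)) := by
        apply Finset.sum_congr rfl; intro s _; rw [hψρ]
    _ = ∑ p ∈ Finset.univ.image ρ, F (ψ p) := by
        rw [Finset.sum_image (fun a _ b _ h => hinj h)]
    _ ≤ ∑ p : ZMod n × Bool, F (ψ p) :=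
        Finset.sum_le_sum_of_subset (Finset.subset_univ _)
    _ = ∑ a : ZMod n, (F (c - 2*a - 1) + F (c - 2*a)) := by
        rw [Fintype.sum_prod_type]
        apply Finset.sum_congr rfl
        intro a _
        rw [Fintype.sum_bool]
        simp [hψ]

lemma sum_range_two_mul (f : ℕ → ℕ) (K : ℕ) :
    ∑ t ∈ Finset.range (2*K), f t = ∑ u ∈ Finset.range K, (f (2*u) + f (2*u+1)) := by
  induction K with
  | zero => simp
  | succ k ih =>
    have : 2 * (k + 1) = (2*k) + 1 + 1 := by ring
    rw [this, Finset.sum_range_succ, Finset.sum_range_succ, ih, Finset.sum_range_succ]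
    ring

lemma big_S_ge (H : ZMod n → ℕ) (c : ZMod n) :
    (n / 3 / 2) * (∑ s : ZMod n, H s) ≤
      ∑ a : ZMod n, ∑ t ∈ Finset.range (n / 3), H (c - 2*a - (t : ZMod n)) := by
  classical
  set m := n / 3 with hm
  have step1 : ∀ a : ZMod n,
      ∑ u ∈ Finset.range (m/2), (H (c - 2*a - ((2*u : ℕ) : ZMod n))
        + H (c - 2*a - ((2*u+1 : ℕ) : ZMod n)))
      ≤ ∑ t ∈ Finset.range m, H (c - 2*a - (t : ZMod n)) := by
    intro a
    rw [← sum_range_two_mul (fun t => H (c - 2*a - (t : ZMod n))) (m/2)]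
    exact Finset.sum_le_sum_of_subset (Finset.range_subset_range.mpr (by omega))
  calc (m/2) * (∑ s : ZMod n, H s)
      = ∑ u ∈ Finset.range (m/2), ∑ s : ZMod n, H s := by
        rw [Finset.sum_const, Finset.card_range, smul_eq_mul]
    _ ≤ ∑ u ∈ Finset.range (m/2), ∑ a : ZMod n,
          (H (c - 2*a - ((2*u : ℕ) : ZMod n)) + H (c - 2*a - ((2*u+1 : ℕ) : ZMod n))) := by
        apply Finset.sum_le_sum
        intro u _
        have := zmod_sum_le_double n H (c - ((2*u : ℕ) : ZMod n))
        calc ∑ s : ZMod n, H s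
            ≤ ∑ a : ZMod n, (H (c - ((2*u:ℕ) : ZMod n) - 2*a - 1)
              + H (c - ((2*u:ℕ) : ZMod n) - 2*a)) := this
          _ = ∑ a : ZMod n,
              (H (c - 2*a - ((2*u : ℕ) : ZMod n)) + H (c - 2*a - ((2*u+1 : ℕ) : ZMod n))) := by
              apply Finset.sum_congr rfl
              intro a _
              rw [add_comm]
              congr 1
              · congr 1; push_cast; ring
              · congr 1; push_cast; ring
    _ = ∑ a : ZMod n, ∑ u ∈ Finset.range (m/2),
          (H (c - 2*a - ((2*u : ℕ) : ZMod n)) + H (c - 2*a - ((2*u+1 : ℕ) : ZMod n))) :=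
        Finset.sum_comm
    _ ≤ ∑ a : ZMod n, ∑ t ∈ Finset.range m, H (c - 2*a - (t : ZMod n)) :=
        Finset.sum_le_sum (fun a _ => step1 a)

lemma T_ge (hn : 3 ≤ n) :
    (n/2 - 5*n/12) * (5*n/12 - (n/3 - 1)) ≤
      ∑ s : ZMod n, (cycDist n s 0 - (n/3 - 1)) := by
  classical
  set lo := 5*n/12 with hlo
  set hi := n/2 with hhi
  have hterm : ∀ v ∈ Finset.Ico lo hi, lo - (n/3 - 1) ≤ cycDist n (v : ZMod n) 0 - (n/3 - 1) := by
    intro v hv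
    rw [Finset.mem_Ico] at hv
    have hvn : v < n := by omega
    have := min_le_cycDist n ((v : ZMod n)) 0
    rw [sub_zero, ZMod.val_natCast_of_lt hvn] at this
    have hmin : min v (n - v) = v := by omega
    rw [hmin] at this
    omega
  calc (hi - lo) * (lo - (n/3 - 1))
      ≤ ∑ v ∈ Finset.Ico lo hi, (cycDist n (v : ZMod n) 0 - (n/3 - 1)) := by
        have := Finset.card_nsmul_le_sum (Finset.Ico lo hi)
          (fun v => cycDist n (v : ZMod n) 0 - (n/3 - 1)) (lo - (n/3 - 1)) hterm
        rwa [Nat.card_Ico, smul_eq_mul] at this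
    _ = ∑ s ∈ (Finset.Ico lo hi).image (Nat.cast : ℕ → ZMod n), (cycDist n s 0 - (n/3 - 1)) := by
        rw [Finset.sum_image]
        intro v hv w hw h
        rw [Finset.mem_coe, Finset.mem_Ico] at hv hw
        exact natCast_inj_lt n (by omega) (by omega) h
    _ ≤ ∑ s : ZMod n, (cycDist n s 0 - (n/3 - 1)) :=
        Finset.sum_le_sum_of_subset (Finset.subset_univ _)

end reindex

section vbounds
variable (n : ℕ) [NeZero n] (hn : 3 ≤ n)

lemma P_pos : (0:ℝ) < (2 : ℝ) ^ ((n : ℝ) / 6) := Real.rpow_pos_of_pos (by norm_num) _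

lemma eta_pos : 0 < eta n := by
  have := P_pos n
  have hn0 : (0:ℝ) < n := by exact_mod_cast (NeZero.pos n)
  rw [eta]; positivity

lemma dlt_pos : 0 < dlt n := by
  have := P_pos n
  have hn0 : (0:ℝ) < n := by exact_mod_cast (NeZero.pos n)
  have : (0:ℝ) < Real.sqrt n := Real.sqrt_pos.mpr hn0
  rw [dlt]; positivity

lemma eta_le_dlt : eta n ≤ dlt n := by
  have hP := P_pos n
  have hn0 : (0:ℝ) < n := by exact_mod_cast (NeZero.pos n)
  have h1 : (1:ℝ) ≤ n := by exact_mod_cast (NeZero.pos n)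
  have hs : Real.sqrt n ≤ n := by
    nth_rewrite 2 [← Real.sqrt_sq (le_of_lt hn0)]
    apply Real.sqrt_le_sqrt
    nlinarith
  have hs0 : (0:ℝ) < Real.sqrt n := Real.sqrt_pos.mpr hn0
  rw [eta, dlt]
  apply div_le_div_of_nonneg_left (by norm_num) (by positivity)
  exact mul_le_mul_of_nonneg_right hs (le_of_lt hP)

lemma dlt_sq :
    dlt n ^ 2 = 1 / ((n:ℝ) * ((2 : ℝ) ^ ((n : ℝ) / 6))^2) := by
  have hn0 : (0:ℝ) < n := by exact_mod_cast (NeZero.pos n)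
  rw [dlt, div_pow, one_pow, mul_pow, Real.sq_sqrt (le_of_lt hn0)]

include hn

lemma vI_sq_ge (a k : ZMod n) :
    (eta n ^ 2 + dlt n ^ 2 * ((cycDist n (k - a) 0 - (n/3 - 1) : ℕ) : ℝ)) / 2
      ≤ vI n a k ^ 2 := by
  have hη := eta_pos n
  have hδ := dlt_pos n
  by_cases hk : k ∈ arc n a
  · obtain ⟨t, ht, rfl⟩ := (mem_arc n).mp hk
    have h1 : cycDist n (a + (t:ZMod n) - a) 0 ≤ t := by
      have := cycDist_natCast_le n t 0
      simpa using this
    have h0 : cycDist n (a + (t:ZMod n) - a) 0 - (n/3 - 1) = 0 := by omega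
    rw [vI, if_pos hk, h0]
    push_cast
    nlinarith
  · rw [vI, if_neg hk]
    have hd1 : 1 ≤ dArc n a k := dArc_pos n hn a k hk
    have hH : cycDist n (k - a) 0 - (n/3 - 1) ≤ dArc n a k := by
      have h1 := dArc_ge n hn a k
      have h2 : cycDist n k a = cycDist n (k - a) 0 := cycDist_shift n k a
      omega
    have hd0 : (0:ℝ) ≤ (dArc n a k : ℝ) := Nat.cast_nonneg _
    rw [mul_pow, Real.sq_sqrt hd0]
    have hησδ : eta n ^ 2 ≤ dlt n ^ 2 * (dArc n a k : ℝ) := by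
      have h1 : eta n ^ 2 ≤ dlt n ^ 2 := by nlinarith [eta_le_dlt n]
      have h2 : (1:ℝ) ≤ (dArc n a k : ℝ) := by exact_mod_cast hd1
      nlinarith
    have hHle : dlt n ^ 2 * ((cycDist n (k - a) 0 - (n/3 - 1) : ℕ) : ℝ)
        ≤ dlt n ^ 2 * (dArc n a k : ℝ) := by
      apply mul_le_mul_of_nonneg_left _ (by positivity)
      exact_mod_cast hH
    linarith

end vbounds

lemma nat_endgame (n m S T : ℕ) (hn : 3 ≤ n) (hm : m = n/3)
    (hT : (n/2 - 5*n/12) * (5*n/12 - (n/3 - 1)) ≤ T)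
    (hS : m/2 * T ≤ S) :
    8*n + 2*n^3 ≤ 10^9 * (m + S) := by
  by_cases hbig : n ≤ 200
  · have hm1 : 1 ≤ m := by omega
    have h3 : n^3 ≤ 200^3 := Nat.pow_le_pow_left hbig 3
    omega
  · push_neg at hbig
    have hp : n / 13 ≤ n/2 - 5*n/12 := by omega
    have hq : n / 13 ≤ 5*n/12 - (n/3 - 1) := by omega
    have hu : n / 7 ≤ m/2 := by omega
    set v := n / 13 with hv
    set u := n / 7 with hu'
    have hS2 : u * (v * v) ≤ S := by
      calc u * (v * v) ≤ (m/2) * T :=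
            Nat.mul_le_mul hu (le_trans (Nat.mul_le_mul hp hq) hT)
        _ ≤ S := hS
    have h7 : n ≤ 7*u + 6 := by omega
    have h13 : n ≤ 13*v + 12 := by omega
    have hun : 100 * n ≤ 700 * u + 600 := by omega
    have hvn : 100 * n ≤ 1300 * v + 1200 := by omega
    -- since n > 200 : 700 u ≥ 100 n - 600 ≥ 97 n, 1300 v ≥ 94 n
    have hu2 : 97 * n ≤ 700 * u := by omega
    have hv2 : 94 * n ≤ 1300 * v := by omega
    have key : 97 * 94 * 94 * (n^3) ≤ 700 * 1300 * 1300 * (u * (v * v)) := by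
      have := Nat.mul_le_mul (Nat.mul_le_mul hu2 hv2) hv2
      calc 97 * 94 * 94 * n^3 = 97 * n * (94 * n) * (94 * n) := by ring
        _ ≤ 700 * u * (1300 * v) * (1300 * v) := this
        _ = 700 * 1300 * 1300 * (u * (v * v)) := by ring
    have hn3 : n ≤ n^3 := Nat.le_self_pow (by norm_num) n
    nlinarith [hS2, key]


set_option maxHeartbeats 2000000 in
/-- For every nonempty `x ⊆ ZMod n`, with `ℓ = max_{k ∈ x} d_{Cₙ}(0,k)`,
`Σ_{I ∈ 𝓘} Σ_{A ⊆ I} Σ_{k} 1[|A ∩ (x - k)| odd]·(v^I_k)² ≥ c·(1 + ℓ²)`. -/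
theorem sum_vI_walsh_sq_ge :
    ∃ c : ℝ, 0 < c ∧
      ∀ (n : ℕ) [NeZero n], 3 ≤ n → ∀ x : Finset (ZMod n), x.Nonempty →
        c * (1 + ((x.sup (fun k => cycDist n 0 k) : ℕ) : ℝ) ^ 2) ≤
          ∑ a : ZMod n, ∑ A ∈ (arc n a).powerset, ∑ k : ZMod n,
            (if Odd (A ∩ x.image (fun j => j - k)).card then (vI n a k) ^ 2 else 0) := by
  classical
  refine ⟨1/10^9, by norm_num, ?_⟩
  intro n _ hn x hx
  obtain ⟨j₀, hj₀⟩ := hx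
  have hm1 : 1 ≤ n / 3 := by omega
  have hmn : n / 3 < n := by omega
  have hn0 : (0:ℝ) < n := by exact_mod_cast (by omega : 0 < n)
  set m := n / 3 with hm
  set H : ZMod n → ℕ := fun s => cycDist n s 0 - (m - 1) with hH
  set S : ℕ := ∑ a : ZMod n, ∑ t ∈ Finset.range m, H (j₀ - 2*a - (t : ZMod n)) with hSdef
  set T : ℕ := ∑ s : ZMod n, H s with hTdef
  have hS : m/2 * T ≤ S := big_S_ge n H j₀
  have hT : (n/2 - 5*n/12) * (5*n/12 - (n/3 - 1)) ≤ T := T_ge n hn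
  have hend : 8*n + 2*n^3 ≤ 10^9 * (m + S) := nat_endgame n m S T hn hm hT hS
  set ℓ := x.sup (fun k => cycDist n 0 k) with hℓ
  have hℓn : ℓ ≤ n/2 := by
    apply Finset.sup_le
    intro k hk
    have h1 := cycDist_le_val n 0 k
    have h2 := cycDist_le_sub_val n 0 k
    have h3 : (0 - k : ZMod n).val < n := ZMod.val_lt _
    omega
  set P := (2:ℝ)^((n:ℝ)/6) with hPdef
  have hP := P_pos n
  have heta2 : eta n ^ 2 = 1/((n:ℝ)^2 * P^2) := by rw [eta, div_pow, one_pow, mul_pow]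
  have hdlt2 : dlt n ^ 2 = 1/((n:ℝ) * P^2) := dlt_sq n
  have hP2 : P^2 = (2:ℝ)^((n:ℝ)/3) := by
    rw [sq, hPdef, ← Real.rpow_add (by norm_num : (0:ℝ) < 2)]
    congr 1
    ring
  have hpow : P^2/4 ≤ ((2:ℝ)^(m-1 : ℕ)) := by
    rw [← Real.rpow_natCast 2 (m-1), hP2]
    have hcast : ((m-1 : ℕ) : ℝ) = (m:ℝ) - 1 := by
      rw [Nat.cast_sub hm1]; norm_num
    have h3 : (n:ℝ)/3 - 2 ≤ ((m-1:ℕ):ℝ) := by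
      have : (n:ℝ) ≤ 3*(m:ℝ) + 2 := by exact_mod_cast (by omega : n ≤ 3*m + 2)
      rw [hcast]; linarith
    calc (2:ℝ)^((n:ℝ)/3)/4 = (2:ℝ)^((n:ℝ)/3 - 2) := by
          rw [Real.rpow_sub (by norm_num : (0:ℝ) < 2)]
          norm_num
      _ ≤ (2:ℝ)^(((m-1:ℕ)):ℝ) := Real.rpow_le_rpow_of_exponent_le one_le_two h3
  -- the per-term bound
  have key : ∀ (a : ZMod n) (t : ℕ), t < m →
      ((2:ℝ)^(m-1 : ℕ)) * ((eta n^2 + dlt n^2 * (H (j₀ - 2*a - (t:ZMod n)) : ℝ))/2) ≤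
        ∑ A ∈ (arc n a).powerset,
          (if Odd ((A ∩ x.image (fun j => j - (j₀ - a - (t:ZMod n)))).card)
            then vI n a (j₀ - a - (t:ZMod n)) ^ 2 else 0) := by
    intro a t ht
    set k := j₀ - a - (t:ZMod n) with hk
    have hc0I : a + (t:ZMod n) ∈ arc n a := (mem_arc n).mpr ⟨t, ht, rfl⟩
    have hc0B : a + (t:ZMod n) ∈ x.image (fun j => j - k) := by
      apply Finset.mem_image.mpr
      exact ⟨j₀, hj₀, by rw [hk]; ring⟩
    have hw : (0:ℝ) ≤ vI n a k ^ 2 := sq_nonneg _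
    have hcard : (arc n a).card = m := card_arc n hn a
    have h1 := sum_ite_odd_ge (arc n a) (x.image (fun j => j - k)) (a + (t:ZMod n))
      hc0I hc0B (vI n a k ^ 2) hw
    rw [hcard] at h1
    refine le_trans ?_ h1
    apply mul_le_mul_of_nonneg_left _ (by positivity)
    have h2 := vI_sq_ge n hn a k
    have h3 : k - a = j₀ - 2*a - (t:ZMod n) := by rw [hk]; ring
    rw [h3] at h2
    exact h2
  -- lower bound total by restricted sums
  have main : ((2:ℝ)^(m-1 : ℕ)) * (((n*m : ℕ) : ℝ) * eta n^2 + dlt n^2 * (S:ℝ))/2 ≤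
      ∑ a : ZMod n, ∑ A ∈ (arc n a).powerset, ∑ k : ZMod n,
        (if Odd (A ∩ x.image (fun j => j - k)).card then (vI n a k) ^ 2 else 0) := by
    have swap : ∀ a : ZMod n,
        (∑ A ∈ (arc n a).powerset, ∑ k : ZMod n,
          (if Odd (A ∩ x.image (fun j => j - k)).card then (vI n a k) ^ 2 else 0)) =
        ∑ k : ZMod n, ∑ A ∈ (arc n a).powerset,
          (if Odd (A ∩ x.image (fun j => j - k)).card then (vI n a k) ^ 2 else 0) :=
      fun a => Finset.sum_comm
    have step : ∀ a : ZMod n,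
        ∑ t ∈ Finset.range m, ((2:ℝ)^(m-1 : ℕ)) *
            ((eta n^2 + dlt n^2 * (H (j₀ - 2*a - (t:ZMod n)) : ℝ))/2) ≤
          ∑ k : ZMod n, ∑ A ∈ (arc n a).powerset,
            (if Odd (A ∩ x.image (fun j => j - k)).card then (vI n a k) ^ 2 else 0) := by
      intro a
      have hinj : ∀ t ∈ Finset.range m, ∀ s ∈ Finset.range m,
          j₀ - a - (t:ZMod n) = j₀ - a - (s:ZMod n) → t = s := by
        intro t ht s hs hts
        rw [Finset.mem_range] at ht hs
        have : (t : ZMod n) = (s : ZMod n) := by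
          have := sub_right_injective (G := ZMod n) hts
          exact this
        exact natCast_inj_lt n (by omega) (by omega) this
      calc ∑ t ∈ Finset.range m, ((2:ℝ)^(m-1 : ℕ)) *
              ((eta n^2 + dlt n^2 * (H (j₀ - 2*a - (t:ZMod n)) : ℝ))/2)
          ≤ ∑ t ∈ Finset.range m, ∑ A ∈ (arc n a).powerset,
              (if Odd ((A ∩ x.image (fun j => j - (j₀ - a - (t:ZMod n)))).card)
                then vI n a (j₀ - a - (t:ZMod n)) ^ 2 else 0) := by
            apply Finset.sum_le_sum
            intro t ht
            exact key a t (Finset.mem_range.mp ht)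
        _ = ∑ k ∈ (Finset.range m).image (fun t : ℕ => j₀ - a - (t:ZMod n)),
              ∑ A ∈ (arc n a).powerset,
              (if Odd ((A ∩ x.image (fun j => j - k)).card) then vI n a k ^ 2 else 0) :=
            (Finset.sum_image (g := fun t : ℕ => j₀ - a - (t:ZMod n))
              (f := fun k => ∑ A ∈ (arc n a).powerset,
              (if Odd ((A ∩ x.image (fun j => j - k)).card) then vI n a k ^ 2 else 0))
              hinj).symm
        _ ≤ ∑ k : ZMod n, ∑ A ∈ (arc n a).powerset,
              (if Odd (A ∩ x.image (fun j => j - k)).card then (vI n a k) ^ 2 else 0) := by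
            apply Finset.sum_le_sum_of_subset_of_nonneg (Finset.subset_univ _)
            intro k _ _
            apply Finset.sum_nonneg
            intro A _
            positivity
    calc ((2:ℝ)^(m-1 : ℕ)) * (((n*m : ℕ) : ℝ) * eta n^2 + dlt n^2 * (S:ℝ))/2
        = ∑ a : ZMod n, ∑ t ∈ Finset.range m, ((2:ℝ)^(m-1 : ℕ)) *
            ((eta n^2 + dlt n^2 * (H (j₀ - 2*a - (t:ZMod n)) : ℝ))/2) := by
          have hScast : (S:ℝ) = ∑ a : ZMod n, ∑ t ∈ Finset.range m,
              (H (j₀ - 2*a - (t:ZMod n)) : ℝ) := by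
            rw [hSdef]; push_cast; ring
          have expand : ∀ (a : ZMod n) (t : ℕ),
              ((2:ℝ)^(m-1:ℕ)) * ((eta n^2 + dlt n^2 * (H (j₀-2*a-(t:ZMod n)) : ℝ))/2) =
                (2:ℝ)^(m-1:ℕ)/2 * eta n^2
                  + (2:ℝ)^(m-1:ℕ)/2 * dlt n^2 * (H (j₀-2*a-(t:ZMod n)) : ℝ) := by
            intro a t; ring
          simp only [expand, Finset.sum_add_distrib, Finset.sum_const, Finset.card_range,
            Finset.card_univ, ZMod.card, nsmul_eq_mul, ← Finset.mul_sum]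
          rw [← hScast]
          push_cast
          ring
        _ ≤ _ := by
          apply Finset.sum_le_sum
          intro a _
          rw [swap a]
          exact step a
  -- final numeric chain
  have numeric2 : ((m:ℝ) + S)/(8*n) ≤
      ((2:ℝ)^(m-1 : ℕ)) * (((n*m : ℕ) : ℝ) * eta n^2 + dlt n^2 * (S:ℝ))/2 := by
    have hSnn : (0:ℝ) ≤ S := Nat.cast_nonneg _
    have hmnn : (0:ℝ) ≤ m := Nat.cast_nonneg _
    have hsum : (((n*m : ℕ) : ℝ) * eta n^2 + dlt n^2 * (S:ℝ)) = ((m:ℝ) + S)/((n:ℝ)*P^2) := by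
      rw [heta2, hdlt2]
      push_cast
      field_simp
    rw [hsum]
    calc ((m:ℝ) + S)/(8*n) = (P^2/4) * (((m:ℝ) + S)/((n:ℝ)*P^2))/2 := by
          have hP0 : P ≠ 0 := hP.ne'
          field_simp
          ring
      _ ≤ ((2:ℝ)^(m-1 : ℕ)) * (((m:ℝ) + S)/((n:ℝ)*P^2))/2 := by
          apply div_le_div_of_nonneg_right _ (by norm_num)
          apply mul_le_mul_of_nonneg_right hpow
          positivity
  have numeric1 : (1/10^9 : ℝ) * (1 + (ℓ:ℝ)^2) ≤ ((m:ℝ) + S)/(8*n) := by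
    have hl : (ℓ:ℝ) ≤ (n:ℝ)/2 := by
      calc (ℓ:ℝ) ≤ ((n/2 : ℕ):ℝ) := by exact_mod_cast hℓn
        _ ≤ (n:ℝ)/2 := by
          have := Nat.cast_div_le (m := n) (n := 2) (α := ℝ)
          simpa using this
    have hl0 : (0:ℝ) ≤ (ℓ:ℝ) := Nat.cast_nonneg _
    have hcast : (8*(n:ℝ) + 2*(n:ℝ)^3) ≤ 10^9 * ((m:ℝ) + S) := by exact_mod_cast hend
    rw [le_div_iff₀ (by positivity : (0:ℝ) < 8*n)]
    nlinarith [hcast, mul_le_mul hl hl hl0 (by positivity : (0:ℝ) ≤ (n:ℝ)/2)]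
  calc (1/10^9 : ℝ) * (1 + (ℓ:ℝ)^2) ≤ ((m:ℝ) + S)/(8*n) := numeric1
    _ ≤ _ := le_trans numeric2 main
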